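/- Identification under independent right censoring: let C be a random variable independent of (E₁, E₂, E₃) whose survival function S_C(t) = P(C > t) is continuous. Then the subdistribution of observed (uncensored) intermediate events in the latent-time construction equals the censoring-weighted cumulative incidence: for every t ≥ 0, P(T₁ ≤ t, T₁ < D₀, T₁ ≤ C) = ∫₀ᵗ exp{−Λ₀(s) − Λ⋆(s)} λ⋆(s) S_C(s) ds. -/

import Mathlib

open MeasureTheory ProbabilityTheory Filter Set Topology

/-- Cumulative hazard `Λ(t) = ∫₀ᵗ λ(u) du`. -/
noncomputable def cumHaz (lam : ℝ → ℝ) (t : ℝ) : ℝ := ∫ u in (0:ℝ)..t, lam u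

/-- Post-intermediate cumulative hazard `Λ₁(t,s) = ∫ₛᵗ λ₁(u,s) du`. -/
noncomputable def cumHaz1 (lam1 : ℝ → ℝ → ℝ) (t s : ℝ) : ℝ := ∫ u in s..t, lam1 u s

/-- The counterfactual cumulative incidence function
`F(t) = ∫₀ᵗ e^{−Λ₀(s)−Λ⋆(s)} λ₀(s) ds + ∫₀ᵗ e^{−Λ₀(s)−Λ⋆(s)} λ⋆(s) (1 − e^{−Λ₁(t,s)}) ds`. -/
noncomputable def cif (lamS lam0 : ℝ → ℝ) (lam1 : ℝ → ℝ → ℝ) (t : ℝ) : ℝ :=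
  (∫ s in (0:ℝ)..t, Real.exp (-cumHaz lam0 s - cumHaz lamS s) * lam0 s) +
  ∫ s in (0:ℝ)..t, Real.exp (-cumHaz lam0 s - cumHaz lamS s) * lamS s *
    (1 - Real.exp (-cumHaz1 lam1 t s))

namespace CumHazAux

lemma cumHaz_zero (lam : ℝ → ℝ) : cumHaz lam 0 = 0 :=
  intervalIntegral.integral_same

lemma intInt {lam : ℝ → ℝ} (h : ContinuousOn lam (Set.Ici 0)) {a b : ℝ}
    (ha : 0 ≤ a) (hb : 0 ≤ b) : IntervalIntegrable lam volume a b :=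
  (h.mono (fun x hx => le_trans (le_min ha hb) hx.1)).intervalIntegrable

lemma cumHaz_sub {lam : ℝ → ℝ} (h : ContinuousOn lam (Set.Ici 0)) {a b : ℝ}
    (ha : 0 ≤ a) (hb : 0 ≤ b) :
    cumHaz lam b - cumHaz lam a = ∫ u in a..b, lam u := by
  unfold cumHaz
  rw [intervalIntegral.integral_interval_sub_left (intInt h le_rfl hb) (intInt h le_rfl ha)]

lemma strictMonoOn {lam : ℝ → ℝ} (h : ContinuousOn lam (Set.Ici 0))
    (hpos : ∀ t ∈ Set.Ici (0:ℝ), 0 < lam t) :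
    StrictMonoOn (cumHaz lam) (Set.Ici 0) := by
  intro a ha b hb hab
  have hpos' : 0 < ∫ u in a..b, lam u :=
    intervalIntegral.intervalIntegral_pos_of_pos_on (intInt h ha hb)
      (fun x hx => hpos x (le_trans ha hx.1.le)) hab
  have := cumHaz_sub h ha hb
  linarith

lemma nonneg {lam : ℝ → ℝ} (h : ContinuousOn lam (Set.Ici 0))
    (hpos : ∀ t ∈ Set.Ici (0:ℝ), 0 < lam t) {b : ℝ} (hb : 0 ≤ b) :
    0 ≤ cumHaz lam b := by
  rcases eq_or_lt_of_le hb with rfl | hb'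
  · rw [cumHaz_zero]
  · have := strictMonoOn h hpos (self_mem_Ici) hb hb'
    rw [cumHaz_zero] at this; exact this.le

lemma contOnIcc {lam : ℝ → ℝ} (h : ContinuousOn lam (Set.Ici 0)) {b : ℝ} (hb : 0 ≤ b) :
    ContinuousOn (cumHaz lam) (Set.Icc 0 b) := by
  have hint : IntegrableOn lam (Set.uIcc 0 b) volume := by
    rw [Set.uIcc_of_le hb]
    exact (h.mono (fun x hx => hx.1)).integrableOn_Icc
  have := intervalIntegral.continuousOn_primitive_interval hint
  rw [Set.uIcc_of_le hb] at this
  exact this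

lemma surj {lam : ℝ → ℝ} (h : ContinuousOn lam (Set.Ici 0))
    (htop : Tendsto (cumHaz lam) atTop atTop) {x : ℝ} (hx : 0 ≤ x) :
    ∃ u, 0 ≤ u ∧ cumHaz lam u = x := by
  obtain ⟨b, hb1, hb2⟩ := ((htop.eventually (eventually_ge_atTop x)).and
    (eventually_ge_atTop (0:ℝ))).exists
  have hx' : x ∈ Set.Icc (cumHaz lam 0) (cumHaz lam b) := by
    rw [cumHaz_zero]; exact ⟨hx, hb1⟩
  obtain ⟨u, hu, hux⟩ := intermediate_value_Icc hb2 (contOnIcc h hb2) hx'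
  exact ⟨u, hu.1, hux⟩

lemma hasDerivAt {lam : ℝ → ℝ} (h : ContinuousOn lam (Set.Ici 0)) {x : ℝ} (hx : 0 < x) :
    HasDerivAt (cumHaz lam) (lam x) x := by
  have hmem : Set.Ici (0:ℝ) ∈ nhds x := Ici_mem_nhds hx
  exact intervalIntegral.integral_hasDerivAt_right (intInt h le_rfl hx.le)
    ((h.mono Ioi_subset_Ici_self).stronglyMeasurableAtFilter isOpen_Ioi x hx)
    (h.continuousAt hmem)

end CumHazAux

/-- identification under independent right censoring: for a censoring
time `C` independent of `(E₁,E₂,E₃)` with continuous survival function `S_C`,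
`P(T₁ ≤ t, T₁ < D₀, T₁ ≤ C) = ∫₀ᵗ exp(−Λ₀(s)−Λ⋆(s)) λ⋆(s) S_C(s) ds`. -/
theorem latent_censored_identification
    {Ω : Type*} [MeasurableSpace Ω] (P : Measure Ω) [IsProbabilityMeasure P]
    (lamS lam0 : ℝ → ℝ) (lam1 : ℝ → ℝ → ℝ)
    (hScont : ContinuousOn lamS (Set.Ici 0))
    (h0cont : ContinuousOn lam0 (Set.Ici 0))
    (h1cont : ContinuousOn (fun p : ℝ × ℝ => lam1 p.1 p.2) {p : ℝ × ℝ | 0 ≤ p.2 ∧ p.2 ≤ p.1})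
    (hSpos : ∀ t ∈ Set.Ici (0:ℝ), 0 < lamS t)
    (h0pos : ∀ t ∈ Set.Ici (0:ℝ), 0 < lam0 t)
    (h1nn : ∀ s t : ℝ, 0 ≤ s → s ≤ t → 0 ≤ lam1 t s)
    (hStop : Tendsto (cumHaz lamS) atTop atTop)
    (h0top : Tendsto (cumHaz lam0) atTop atTop)
    (h1mono : ∀ s : ℝ, 0 ≤ s → StrictMonoOn (fun t => cumHaz1 lam1 t s) (Set.Ici s))
    (h1top : ∀ s : ℝ, 0 ≤ s → Tendsto (fun t => cumHaz1 lam1 t s) atTop atTop)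
    (E1 E2 E3 : Ω → ℝ)
    (hE1m : Measurable E1) (hE2m : Measurable E2) (hE3m : Measurable E3)
    (hindep : iIndepFun (m := fun _ => Real.measurableSpace) ![E1, E2, E3] P)
    (hE1d : P.map E1 = expMeasure 1)
    (hE2d : P.map E2 = expMeasure 1)
    (hE3d : P.map E3 = expMeasure 1)
    (T1 D0 T2 : Ω → ℝ)
    (hT1 : ∀ ω, 0 ≤ T1 ω ∧ cumHaz lamS (T1 ω) = E1 ω)
    (hD0 : ∀ ω, 0 ≤ D0 ω ∧ cumHaz lam0 (D0 ω) = E2 ω)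
    (hT2a : ∀ ω, D0 ω ≤ T1 ω → T2 ω = D0 ω)
    (hT2b : ∀ ω, T1 ω < D0 ω → T1 ω ≤ T2 ω ∧ cumHaz1 lam1 (T2 ω) (T1 ω) = E3 ω)
    (C : Ω → ℝ) (hCm : Measurable C)
    (hCindep : IndepFun (fun ω => (E1 ω, E2 ω, E3 ω)) C P)
    (SC : ℝ → ℝ)
    (hSC : ∀ t : ℝ, SC t = (P {ω | t < C ω}).toReal)
    (hSCcont : Continuous SC) :
    ∀ t : ℝ, 0 ≤ t →
      P {ω | T1 ω ≤ t ∧ T1 ω < D0 ω ∧ T1 ω ≤ C ω} =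
        ENNReal.ofReal
          (∫ s in (0:ℝ)..t,
            Real.exp (-cumHaz lam0 s - cumHaz lamS s) * lamS s * SC s) := by
  intro t ht
  -- basic monotonicity facts
  have hSmono : StrictMonoOn (cumHaz lamS) (Set.Ici 0) := CumHazAux.strictMonoOn hScont hSpos
  have h0mono : StrictMonoOn (cumHaz lam0) (Set.Ici 0) := CumHazAux.strictMonoOn h0cont h0pos
  have hE1nn : ∀ ω, 0 ≤ E1 ω := by
    intro ω
    rw [← (hT1 ω).2]
    exact CumHazAux.nonneg hScont hSpos (hT1 ω).1
  -- the inverse function g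
  have hex : ∀ x : ℝ, ∃ u : ℝ, (0 ≤ x → (0 ≤ u ∧ cumHaz lamS u = x)) ∧ (x < 0 → u = x) := by
    intro x
    by_cases hx : 0 ≤ x
    · obtain ⟨u, hu1, hu2⟩ := CumHazAux.surj hScont hStop hx
      exact ⟨u, fun _ => ⟨hu1, hu2⟩, fun h => absurd hx (not_le.mpr h)⟩
    · exact ⟨x, fun h => absurd h hx, fun _ => rfl⟩
  choose g hg using hex
  have hg1 : ∀ x : ℝ, 0 ≤ x → 0 ≤ g x ∧ cumHaz lamS (g x) = x := fun x hx => (hg x).1 hx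
  have hgneg : ∀ x : ℝ, x < 0 → g x = x := fun x hx => (hg x).2 hx
  have hkey : ∀ u : ℝ, 0 ≤ u → g (cumHaz lamS u) = u := by
    intro u hu
    have hx : (0:ℝ) ≤ cumHaz lamS u := CumHazAux.nonneg hScont hSpos hu
    have h1 := hg1 _ hx
    exact hSmono.injOn h1.1 hu h1.2
  have hgmono : Monotone g := by
    intro x y hxy
    rcases lt_or_ge y 0 with hy | hy
    · rw [hgneg x (lt_of_le_of_lt hxy hy), hgneg y hy]; exact hxy
    · rcases lt_or_ge x 0 with hx | hx
      · rw [hgneg x hx]; exact le_trans hx.le (hg1 y hy).1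
      · by_contra hlt
        push_neg at hlt
        have := hSmono (hg1 y hy).1 (hg1 x hx).1 hlt
        rw [(hg1 x hx).2, (hg1 y hy).2] at this
        exact absurd hxy (not_le.mpr this)
  have hgsurj : Function.Surjective g := by
    intro u
    rcases lt_or_ge u 0 with hu | hu
    · exact ⟨u, hgneg u hu⟩
    · exact ⟨cumHaz lamS u, hkey u hu⟩
  have hgcont : Continuous g := hgmono.continuous_of_surjective hgsurj
  -- gp : truncated inverse
  set gp : ℝ → ℝ := fun x => max (g x) 0 with hgp_def
  have hgpcont : Continuous gp := hgcont.max continuous_const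
  have hgpmono : Monotone gp := fun x y h => max_le_max (hgmono h) le_rfl
  have hgpnn : ∀ x, 0 ≤ gp x := fun x => le_max_right _ _
  have hgpkey : ∀ u : ℝ, 0 ≤ u → gp (cumHaz lamS u) = u := by
    intro u hu
    simp only [hgp_def, hkey u hu, max_eq_left hu]
  have hgpE1 : ∀ ω, gp (E1 ω) = T1 ω := by
    intro ω
    rw [← (hT1 ω).2, hgpkey _ (hT1 ω).1]
  -- composition with lam0 hazard
  have h0gpmono : Monotone (fun x => cumHaz lam0 (gp x)) :=
    fun x y h => h0mono.monotoneOn (hgpnn x) (hgpnn y) (hgpmono h)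
  have h0gpnn : ∀ x, 0 ≤ cumHaz lam0 (gp x) :=
    fun x => CumHazAux.nonneg h0cont h0pos (hgpnn x)
  -- survival function of C
  have hCsurvOpen : ∀ b : ℝ, P.map C (Set.Ioi b) = ENNReal.ofReal (SC b) := by
    intro b
    rw [Measure.map_apply hCm measurableSet_Ioi, hSC b,
      ENNReal.ofReal_toReal (measure_ne_top P _)]
    rfl
  have hCsurv : ∀ a : ℝ, P.map C (Set.Ici a) = ENNReal.ofReal (SC a) := by
    intro a
    set s : ℕ → Set ℝ := fun n => Set.Ioi (a - 1/(n+1)) with hs_def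
    have hanti : Antitone s := by
      intro m n hmn
      apply Ioi_subset_Ioi
      have : (1:ℝ)/(n+1) ≤ 1/(m+1) := by
        apply one_div_le_one_div_of_le
        · positivity
        · exact_mod_cast add_le_add_left (Nat.cast_le.mpr hmn) 1
      linarith
    have hInt : (⋂ n, s n) = Set.Ici a := by
      ext x
      simp only [Set.mem_iInter, hs_def, Set.mem_Ioi, Set.mem_Ici]
      constructor
      · intro h
        by_contra hlt
        push_neg at hlt
        obtain ⟨n, hn⟩ := exists_nat_one_div_lt (show (0:ℝ) < a - x by linarith)
        have := h n
        push_cast at hn this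
        linarith
      · intro h n
        have : (0:ℝ) < 1/(n+1) := by positivity
        linarith
    have hlim1 : Tendsto (fun n => P.map C (s n)) atTop (𝓝 (P.map C (Set.Ici a))) := by
      have := tendsto_measure_iInter_atTop (μ := P.map C)
        (fun n => (measurableSet_Ioi).nullMeasurableSet) hanti
        ⟨0, measure_ne_top _ _⟩
      rw [hInt] at this
      exact this
    have hlim2 : Tendsto (fun n => P.map C (s n)) atTop (𝓝 (ENNReal.ofReal (SC a))) := by
      simp only [hs_def, hCsurvOpen]
      apply (ENNReal.continuous_ofReal.tendsto _).comp
      apply (hSCcont.tendsto a).comp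
      have : Tendsto (fun n : ℕ => (1:ℝ)/(n+1)) atTop (𝓝 0) :=
        tendsto_one_div_add_atTop_nhds_zero_nat
      have := tendsto_const_nhds (x := a) (f := atTop (α := ℕ)) |>.sub this
      simpa using this
    exact tendsto_nhds_unique hlim1 hlim2
  -- exponential measure facts
  haveI : IsProbabilityMeasure (expMeasure 1) := isProbabilityMeasure_expMeasure one_pos
  have hexpdef : expMeasure 1 = volume.withDensity (exponentialPDF 1) := rfl
  have hμIoi : ∀ a : ℝ, 0 ≤ a → expMeasure 1 (Set.Ioi a) = ENNReal.ofReal (Real.exp (-a)) := by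
    intro a ha
    have hIic : expMeasure 1 (Set.Iic a) = ENNReal.ofReal (1 - Real.exp (-a)) := by
      rw [hexpdef, withDensity_apply _ measurableSet_Iic,
        lintegral_exponentialPDF_eq_antiDeriv one_pos a, if_pos ha, one_mul]
    have : Set.Ioi a = (Set.Iic a)ᶜ := (Set.compl_Iic).symm
    rw [this, measure_compl measurableSet_Iic (measure_ne_top _ _), measure_univ, hIic]
    have hle : Real.exp (-a) ≤ 1 := Real.exp_le_one_iff.mpr (by linarith)
    rw [← ENNReal.ofReal_one, ← ENNReal.ofReal_sub _ (by linarith)]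
    congr 1
    ring
  -- joint law
  set F2 : Ω → ℝ × ℝ := fun ω => (E1 ω, E2 ω) with hF2_def
  have hF2m : Measurable F2 := hE1m.prodMk hE2m
  have h12 : IndepFun E1 E2 P := hindep.indepFun (show (0:Fin 3) ≠ 1 by decide)
  have hlaw12 : P.map F2 = (expMeasure 1).prod (expMeasure 1) := by
    have h := (indepFun_iff_map_prod_eq_prod_map_map hE1m.aemeasurable hE2m.aemeasurable).mp h12
    rw [hE1d, hE2d] at h
    exact h
  have hFC : IndepFun F2 C P := by
    have := hCindep.comp (φ := fun p : ℝ × ℝ × ℝ => (p.1, p.2.1)) (ψ := id)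
      (measurable_fst.prodMk (measurable_fst.comp measurable_snd)) measurable_id
    exact this
  have hlawFC : P.map (fun ω => (F2 ω, C ω)) = ((expMeasure 1).prod (expMeasure 1)).prod (P.map C) := by
    rw [← hlaw12]
    exact (indepFun_iff_map_prod_eq_prod_map_map hF2m.aemeasurable hCm.aemeasurable).mp hFC
  -- the target event as preimage
  set Λt := cumHaz lamS t with hΛt_def
  have hΛtnn : 0 ≤ Λt := CumHazAux.nonneg hScont hSpos ht
  set B : Set (ℝ × ℝ) := {p | p.1 ≤ Λt ∧ cumHaz lam0 (gp p.1) < p.2} with hB_def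
  set A : Set ((ℝ × ℝ) × ℝ) := {q | q.1 ∈ B ∧ gp q.1.1 ≤ q.2} with hA_def
  have hgpm : Measurable gp := hgpmono.measurable
  have h0gpm : Measurable (fun x => cumHaz lam0 (gp x)) := h0gpmono.measurable
  have hBm : MeasurableSet B := by
    apply MeasurableSet.inter
    · exact measurableSet_le measurable_fst measurable_const
    · exact measurableSet_lt (h0gpm.comp measurable_fst) measurable_snd
  have hAm : MeasurableSet A := by
    apply MeasurableSet.inter
    · exact hBm.preimage measurable_fst
    · exact measurableSet_le (hgpm.comp (measurable_fst.comp measurable_fst)) measurable_snd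
  have hev : {ω | T1 ω ≤ t ∧ T1 ω < D0 ω ∧ T1 ω ≤ C ω} = (fun ω => (F2 ω, C ω)) ⁻¹' A := by
    ext ω
    simp only [Set.mem_setOf_eq, Set.mem_preimage, hA_def, hB_def, hgpE1, hF2_def]
    constructor
    · rintro ⟨h1, h2, h3⟩
      refine ⟨⟨?_, ?_⟩, h3⟩
      · rw [← (hT1 ω).2]
        exact hSmono.monotoneOn (hT1 ω).1 ht h1
      · rw [← (hD0 ω).2]
        exact h0mono (hT1 ω).1 (hD0 ω).1 h2
    · rintro ⟨⟨h1, h2⟩, h3⟩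
      refine ⟨?_, ?_, h3⟩
      · rw [← (hT1 ω).2] at h1
        exact (hSmono.le_iff_le (hT1 ω).1 ht).mp h1
      · rw [← (hD0 ω).2] at h2
        exact (h0mono.lt_iff_lt (hT1 ω).1 (hD0 ω).1).mp h2
  rw [hev, ← Measure.map_apply (hF2m.prodMk hCm) hAm, hlawFC]
  -- compute the product measure of A
  rw [Measure.prod_apply hAm]
  have hslice : ∀ p : ℝ × ℝ, (P.map C) (Prod.mk p ⁻¹' A) =
      B.indicator (fun p => ENNReal.ofReal (SC (gp p.1))) p := by
    intro p
    by_cases hp : p ∈ B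
    · rw [Set.indicator_of_mem hp]
      have : Prod.mk p ⁻¹' A = Set.Ici (gp p.1) := by
        ext c
        simp only [Set.mem_preimage, hA_def, Set.mem_setOf_eq, Set.mem_Ici, hp, true_and]
      rw [this, hCsurv]
    · rw [Set.indicator_of_notMem hp]
      have : Prod.mk p ⁻¹' A = ∅ := by
        ext c
        simp only [Set.mem_preimage, hA_def, Set.mem_setOf_eq, Set.mem_empty_iff_false,
          iff_false]
        rintro ⟨h1, _⟩
        exact hp h1
      rw [this, measure_empty]
  rw [lintegral_congr hslice]
  have hindm : Measurable (fun p : ℝ × ℝ => B.indicator (fun p => ENNReal.ofReal (SC (gp p.1))) p) := by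
    apply Measurable.indicator _ hBm
    exact (ENNReal.measurable_ofReal.comp (hSCcont.measurable.comp (hgpm.comp measurable_fst)))
  rw [MeasureTheory.lintegral_prod _ hindm.aemeasurable]
  have hinner : ∀ x : ℝ, (∫⁻ y, B.indicator (fun p => ENNReal.ofReal (SC (gp p.1))) (x, y) ∂(expMeasure 1)) =
      (Set.Iic Λt).indicator
        (fun x => ENNReal.ofReal (Real.exp (-(cumHaz lam0 (gp x)))) * ENNReal.ofReal (SC (gp x))) x := by
    intro x
    by_cases hx : x ≤ Λt
    · have heq : (fun y => B.indicator (fun p => ENNReal.ofReal (SC (gp p.1))) (x, y)) =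
          (Set.Ioi (cumHaz lam0 (gp x))).indicator (fun _ => ENNReal.ofReal (SC (gp x))) := by
        ext y
        by_cases hy : cumHaz lam0 (gp x) < y
        · rw [Set.indicator_of_mem (show (x, y) ∈ B from ⟨hx, hy⟩),
            Set.indicator_of_mem (show y ∈ Set.Ioi (cumHaz lam0 (gp x)) from hy)]
        · rw [Set.indicator_of_notMem (show (x, y) ∉ B from fun h => hy h.2),
            Set.indicator_of_notMem (show y ∉ Set.Ioi (cumHaz lam0 (gp x)) from hy)]
      rw [heq, lintegral_indicator measurableSet_Ioi, setLIntegral_const,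
        hμIoi _ (h0gpnn x), Set.indicator_of_mem (by exact hx), mul_comm]
    · have heq : (fun y => B.indicator (fun p => ENNReal.ofReal (SC (gp p.1))) (x, y)) =
          fun _ => 0 := by
        ext y
        rw [Set.indicator_of_notMem (fun h => hx h.1)]
      rw [heq, lintegral_const, zero_mul, Set.indicator_of_notMem (by exact hx)]
  rw [lintegral_congr hinner]
  -- pass to Lebesgue measure with exponential density
  have hindm2 : Measurable (fun x : ℝ => (Set.Iic Λt).indicator
      (fun x => ENNReal.ofReal (Real.exp (-(cumHaz lam0 (gp x)))) * ENNReal.ofReal (SC (gp x))) x) := by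
    apply Measurable.indicator _ measurableSet_Iic
    exact (ENNReal.measurable_ofReal.comp ((Real.continuous_exp.measurable).comp h0gpm.neg)).mul
      (ENNReal.measurable_ofReal.comp (hSCcont.measurable.comp hgpm))
  have hpdfm : Measurable (exponentialPDF 1) := (measurable_exponentialPDFReal 1).ennreal_ofReal
  rw [hexpdef, lintegral_withDensity_eq_lintegral_mul _ hpdfm hindm2]
  -- the integrand is the indicator of Icc 0 Λt of ofReal φ
  set φ : ℝ → ℝ := fun x => Real.exp (-(cumHaz lam0 (gp x))) * SC (gp x) * Real.exp (-x)
    with hφ_def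
  have hφnn : ∀ x, 0 ≤ φ x := by
    intro x
    have h1 : 0 ≤ SC (gp x) := by rw [hSC]; exact ENNReal.toReal_nonneg
    positivity
  have hpt : ∀ x : ℝ, (exponentialPDF 1 * fun x => (Set.Iic Λt).indicator
      (fun x => ENNReal.ofReal (Real.exp (-(cumHaz lam0 (gp x)))) * ENNReal.ofReal (SC (gp x))) x) x =
      (Set.Icc 0 Λt).indicator (fun x => ENNReal.ofReal (φ x)) x := by
    intro x
    simp only [Pi.mul_apply]
    rcases lt_or_ge x 0 with hx0 | hx0
    · rw [exponentialPDF_of_neg hx0, zero_mul,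
        Set.indicator_of_notMem (show x ∉ Set.Icc 0 Λt from fun h => absurd h.1 (not_le.mpr hx0))]
    · by_cases hx1 : x ≤ Λt
      · rw [Set.indicator_of_mem (show x ∈ Set.Iic Λt from hx1),
          Set.indicator_of_mem (show x ∈ Set.Icc 0 Λt from ⟨hx0, hx1⟩),
          exponentialPDF_of_nonneg hx0, hφ_def]
        rw [← ENNReal.ofReal_mul (by positivity), ← ENNReal.ofReal_mul (by positivity)]
        congr 1
        have h1 : 0 ≤ SC (gp x) := by rw [hSC]; exact ENNReal.toReal_nonneg
        simp only [one_mul]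
        ring
      · rw [Set.indicator_of_notMem (show x ∉ Set.Iic Λt from hx1),
          Set.indicator_of_notMem (show x ∉ Set.Icc 0 Λt from fun h => hx1 h.2), mul_zero]
  rw [lintegral_congr hpt, lintegral_indicator measurableSet_Icc]
  -- continuity of φ on [0, Λt]
  have hgpmaps : Set.MapsTo gp (Set.Icc 0 Λt) (Set.Icc 0 t) := by
    intro x hx
    refine ⟨hgpnn x, ?_⟩
    have := hgpmono hx.2
    rwa [hgpkey t ht] at this
  have hφcont : ContinuousOn φ (Set.Icc 0 Λt) := by
    apply ContinuousOn.mul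
    apply ContinuousOn.mul
    · exact (Real.continuous_exp.comp_continuousOn
        ((CumHazAux.contOnIcc h0cont ht).comp hgpcont.continuousOn hgpmaps).neg)
    · exact (hSCcont.comp hgpcont).continuousOn
    · exact (Real.continuous_exp.comp continuous_neg).continuousOn
  have hφint : IntegrableOn φ (Set.Icc 0 Λt) volume := hφcont.integrableOn_Icc
  rw [← ofReal_integral_eq_lintegral_ofReal hφint (ae_of_all _ hφnn)]
  congr 1
  -- real change of variables
  have hIcc : ∫ x in Set.Icc 0 Λt, φ x = ∫ x in (0:ℝ)..Λt, φ x := by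
    rw [intervalIntegral.integral_of_le hΛtnn, integral_Icc_eq_integral_Ioc]
  rw [hIcc]
  have huIcc : Set.uIcc (0:ℝ) t = Set.Icc 0 t := Set.uIcc_of_le ht
  have hcov := intervalIntegral.integral_comp_smul_deriv'' (f := cumHaz lamS) (f' := lamS)
    (g := φ) (a := 0) (b := t)
    (by rw [huIcc]; exact CumHazAux.contOnIcc hScont ht)
    (by
      intro x hx
      rw [min_eq_left ht, max_eq_right ht] at hx
      exact (CumHazAux.hasDerivAt hScont hx.1).hasDerivWithinAt)
    (by rw [huIcc]; exact hScont.mono (fun x hx => hx.1))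
    (by
      apply hφcont.mono
      rw [huIcc]
      intro y hy
      obtain ⟨x, hx, rfl⟩ := hy
      constructor
      · exact CumHazAux.nonneg hScont hSpos hx.1
      · exact hSmono.monotoneOn hx.1 ht hx.2)
  rw [CumHazAux.cumHaz_zero] at hcov
  rw [← hcov]
  apply intervalIntegral.integral_congr
  intro s hs
  rw [huIcc] at hs
  simp only [smul_eq_mul, hφ_def, hgpkey s hs.1, Function.comp]
  rw [show -cumHaz lam0 s - cumHaz lamS s = -cumHaz lam0 s + -cumHaz lamS s by ring,
    Real.exp_add]
  ring
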